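/- For the run-length limited shift RLL(d,∞) (binary sequences in which every maximal run of 0s has length at least d), the independence entropy equals (log 2)/(d+1). -/

import Mathlib

open Filter

/-- A finite binary word (`true` = 1) is in the language of `RLL(d,∞)` iff any two 1s are
at distance greater than `d` (equivalently, between any two 1s there are at least `d`
0s). -/
def rllInfLegal (d : ℕ) {n : ℕ} (w : Fin n → Bool) : Prop :=
  ∀ i j : Fin n, (i : ℕ) < (j : ℕ) → (j : ℕ) ≤ (i : ℕ) + d →
    ¬(w i = true ∧ w j = true)

/-- A string of nonempty subsets of `{0,1}` is independently legal for `RLL(d,∞)` if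
every selection yields a word in the language. -/
def rllInfIndepLegal (d : ℕ) {n : ℕ} (A : Fin n → Finset Bool) : Prop :=
  (∀ i, (A i).Nonempty) ∧ ∀ w : Fin n → Bool, (∀ i, w i ∈ A i) → rllInfLegal d w

/-- The maximal independence score of independently legal strings of length `n`. -/
noncomputable def rllInfMaxScore (d : ℕ) (n : ℕ) : ℝ :=
  sSup {r : ℝ | ∃ A : Fin n → Finset Bool, rllInfIndepLegal d A ∧
    r = ∑ i, Real.log ((A i).card)}

section aux

private lemma zero_mem_scoreSet (d n : ℕ) :
    (0:ℝ) ∈ {r : ℝ | ∃ A : Fin n → Finset Bool, rllInfIndepLegal d A ∧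
      r = ∑ i, Real.log ((A i).card)} := by
  refine ⟨fun _ => {false}, ⟨fun i => ⟨false, by simp⟩, ?_⟩, by simp⟩
  intro w hw i j _ _
  have hwi : w i = false := by simpa using hw i
  simp [hwi]

private lemma score_le_aux (d n : ℕ) (A : Fin n → Finset Bool)
    (h : rllInfIndepLegal d A) :
    ∑ i, Real.log ((A i).card) ≤ (((n + d)/(d+1) : ℕ) : ℝ) * Real.log 2 := by
  classical
  set T : Finset (Fin n) := Finset.univ.filter (fun i => true ∈ A i) with hT
  have hgap : ∀ i j : Fin n, true ∈ A i → true ∈ A j → (i:ℕ) < j → (i:ℕ) + d < j := by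
    intro i j hi hj hij
    by_contra hle
    push_neg at hle
    set w : Fin n → Bool := fun k => if true ∈ A k then true else false with hw
    have hwmem : ∀ k, w k ∈ A k := by
      intro k
      by_cases hk : true ∈ A k
      · simp [hw, hk]
      · obtain ⟨b, hb⟩ := h.1 k
        have hbf : b = false := by
          cases b
          · rfl
          · exact absurd hb hk
        simpa [hw, hk] using hbf ▸ hb
    exact h.2 w hwmem i j hij hle ⟨by simp [hw, hi], by simp [hw, hj]⟩
  have hlt : ∀ i : Fin n, (i:ℕ)/(d+1) < (n+d)/(d+1) := by
    intro i
    have hin : (i:ℕ) < n := i.isLt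
    calc (i:ℕ)/(d+1) ≤ (n-1)/(d+1) := Nat.div_le_div_right (by omega)
      _ < (n-1)/(d+1) + 1 := Nat.lt_succ_self _
      _ = ((n-1)+(d+1))/(d+1) := (Nat.add_div_right _ (Nat.succ_pos d)).symm
      _ = (n+d)/(d+1) := by congr 1; omega
  have hcard : T.card ≤ (n + d)/(d+1) := by
    have hinj := Finset.card_le_card_of_injOn
      (f := fun i : Fin n => (⟨(i:ℕ)/(d+1), hlt i⟩ : Fin ((n+d)/(d+1))))
      (s := T) (t := Finset.univ)
      (fun i _ => Finset.mem_univ _) ?_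
    · simpa using hinj
    · intro i hi j hj heq
      have hq : (i:ℕ)/(d+1) = (j:ℕ)/(d+1) := congrArg Fin.val heq
      have hAi : true ∈ A i := (Finset.mem_filter.1 hi).2
      have hAj : true ∈ A j := (Finset.mem_filter.1 hj).2
      have e1 := Nat.div_add_mod (i:ℕ) (d+1)
      have e2 := Nat.div_add_mod (j:ℕ) (d+1)
      have m1 := Nat.mod_lt (i:ℕ) (show 0 < d+1 from Nat.succ_pos d)
      have m2 := Nat.mod_lt (j:ℕ) (show 0 < d+1 from Nat.succ_pos d)
      rw [hq] at e1
      have hval : (i:ℕ) = (j:ℕ) := by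
        by_contra hne
        rcases Nat.lt_or_ge (i:ℕ) (j:ℕ) with hlt' | hge
        · have := hgap i j hAi hAj hlt'
          omega
        · have hlt'' : (j:ℕ) < (i:ℕ) := by omega
          have := hgap j i hAj hAi hlt''
          omega
      exact Fin.ext hval
  have hsum : ∑ i, Real.log ((A i).card) ≤
      ∑ i, (if true ∈ A i then Real.log 2 else 0) := by
    apply Finset.sum_le_sum
    intro i _
    by_cases hi : true ∈ A i
    · rw [if_pos hi]
      have h1 : 0 < (A i).card := Finset.card_pos.2 (h.1 i)
      have h2 : (A i).card ≤ 2 := le_trans (Finset.card_le_univ _) (by simp)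
      have h2' : ((A i).card : ℝ) ≤ 2 := by exact_mod_cast h2
      have h1' : (0:ℝ) < ((A i).card : ℝ) := by exact_mod_cast h1
      gcongr
    · rw [if_neg hi]
      obtain ⟨b, hb⟩ := h.1 i
      have hbf : b = false := by
        cases b
        · rfl
        · exact absurd hb hi
      subst hbf
      have hsub : A i ⊆ {false} := by
        intro c hc
        cases c
        · simp
        · exact absurd hc hi
      have hle1 := Finset.card_le_card hsub
      have hge1 : 0 < (A i).card := Finset.card_pos.2 ⟨false, hb⟩
      have hc1 : (A i).card = 1 := by simpa using Nat.le_antisymm (by simpa using hle1) hge1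
      simp [hc1]
  have hsum2 : ∑ i, (if true ∈ A i then Real.log 2 else 0) =
      (T.card : ℝ) * Real.log 2 := by
    rw [hT, ← Finset.sum_filter, Finset.sum_const, nsmul_eq_mul]
  have hlog : (0:ℝ) ≤ Real.log 2 := Real.log_nonneg one_le_two
  calc ∑ i, Real.log ((A i).card) ≤ (T.card : ℝ) * Real.log 2 := by rw [← hsum2]; exact hsum
    _ ≤ (((n + d)/(d+1) : ℕ) : ℝ) * Real.log 2 := by
        apply mul_le_mul_of_nonneg_right _ hlog
        exact_mod_cast hcard

private lemma maxScore_le (d n : ℕ) :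
    rllInfMaxScore d n ≤ (((n + d)/(d+1) : ℕ) : ℝ) * Real.log 2 := by
  apply csSup_le ⟨0, zero_mem_scoreSet d n⟩
  rintro r ⟨A, hA, rfl⟩
  exact score_le_aux d n A hA

private lemma bddAbove_scoreSet (d n : ℕ) :
    BddAbove {r : ℝ | ∃ A : Fin n → Finset Bool, rllInfIndepLegal d A ∧
      r = ∑ i, Real.log ((A i).card)} := by
  refine ⟨(((n + d)/(d+1) : ℕ) : ℝ) * Real.log 2, ?_⟩
  rintro r ⟨A, hA, rfl⟩
  exact score_le_aux d n A hA

private lemma le_maxScore (d n : ℕ) :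
    ((n/(d+1) : ℕ) : ℝ) * Real.log 2 ≤ rllInfMaxScore d n := by
  classical
  set A : Fin n → Finset Bool :=
    fun i => if (d+1) ∣ (i:ℕ) then ({false, true} : Finset Bool) else {false} with hA
  have hleg : rllInfIndepLegal d A := by
    constructor
    · intro i
      by_cases h : (d+1) ∣ (i:ℕ) <;> simp [hA, h]
    · rintro w hw i j hij hle ⟨hwi, hwj⟩
      have hi : (d+1) ∣ (i:ℕ) := by
        by_contra hc
        have hwi' : w i ∈ ({false} : Finset Bool) := by simpa [hA, hc] using hw i
        simp [hwi] at hwi'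
      have hj : (d+1) ∣ (j:ℕ) := by
        by_contra hc
        have hwj' : w j ∈ ({false} : Finset Bool) := by simpa [hA, hc] using hw j
        simp [hwj] at hwj'
      have hdvd : (d+1) ∣ ((j:ℕ) - (i:ℕ)) := Nat.dvd_sub hj hi
      have hpos : 0 < (j:ℕ) - (i:ℕ) := by omega
      have := Nat.le_of_dvd hpos hdvd
      omega
  have hterm : ∀ i : Fin n, Real.log ((A i).card) =
      if (d+1) ∣ (i:ℕ) then Real.log 2 else 0 := by
    intro i
    by_cases h : (d+1) ∣ (i:ℕ) <;> simp [hA, h]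
  have hscore : ∑ i, Real.log ((A i).card) =
      ((Finset.univ.filter (fun i : Fin n => (d+1) ∣ (i:ℕ))).card : ℝ) * Real.log 2 := by
    rw [Finset.sum_congr rfl (fun i _ => hterm i), ← Finset.sum_filter,
      Finset.sum_const, nsmul_eq_mul]
  have hltn : ∀ t : Fin (n/(d+1)), (t:ℕ)*(d+1) < n := by
    intro t
    have h1 : (t:ℕ) + 1 ≤ n/(d+1) := t.isLt
    have h2 : ((t:ℕ)+1)*(d+1) ≤ (n/(d+1))*(d+1) := Nat.mul_le_mul_right _ h1
    have h3 := Nat.div_mul_le_self n (d+1)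
    have hexp : ((t:ℕ)+1)*(d+1) = (t:ℕ)*(d+1) + (d+1) := by ring
    omega
  have hcount : n/(d+1) ≤ (Finset.univ.filter (fun i : Fin n => (d+1) ∣ (i:ℕ))).card := by
    have hinj := Finset.card_le_card_of_injOn
      (f := fun t : Fin (n/(d+1)) => (⟨(t:ℕ)*(d+1), hltn t⟩ : Fin n))
      (s := Finset.univ) (t := Finset.univ.filter (fun i : Fin n => (d+1) ∣ (i:ℕ)))
      ?_ ?_
    · simpa using hinj
    · intro t _
      simp only [Finset.mem_filter, Finset.mem_univ, true_and]
      exact Finset.mem_coe.2 (Finset.mem_filter.2 ⟨Finset.mem_univ _, dvd_mul_left _ _⟩)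
    · intro t _ s _ heq
      have : (t:ℕ)*(d+1) = (s:ℕ)*(d+1) := congrArg Fin.val heq
      have := Nat.eq_of_mul_eq_mul_right (Nat.succ_pos d) this
      exact Fin.ext this
  have hlog : (0:ℝ) ≤ Real.log 2 := Real.log_nonneg one_le_two
  have hmem : (((Finset.univ.filter (fun i : Fin n => (d+1) ∣ (i:ℕ))).card : ℝ) * Real.log 2)
      ∈ {r : ℝ | ∃ A : Fin n → Finset Bool, rllInfIndepLegal d A ∧
        r = ∑ i, Real.log ((A i).card)} := ⟨A, hleg, hscore.symm⟩
  calc ((n/(d+1) : ℕ) : ℝ) * Real.log 2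
      ≤ ((Finset.univ.filter (fun i : Fin n => (d+1) ∣ (i:ℕ))).card : ℝ) * Real.log 2 := by
        apply mul_le_mul_of_nonneg_right _ hlog
        exact_mod_cast hcount
    _ ≤ rllInfMaxScore d n := le_csSup (bddAbove_scoreSet d n) hmem

end aux

/-- The independence entropy of the run-length limited shift `RLL(d,∞)` equals
`(log 2)/(d+1)`. -/
theorem stmt12 (d : ℕ) :
    Tendsto (fun n : ℕ => rllInfMaxScore d n / n) atTop
      (nhds (Real.log 2 / (d + 1))) := by
  have hd1 : (0:ℝ) < (d:ℝ) + 1 := by positivity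
  have hlog : (0:ℝ) ≤ Real.log 2 := Real.log_nonneg one_le_two
  apply tendsto_of_tendsto_of_tendsto_of_le_of_le'
    (g := fun n : ℕ => Real.log 2/((d:ℝ)+1) - Real.log 2 * (1/(n:ℝ)))
    (h := fun n : ℕ => Real.log 2/((d:ℝ)+1) + Real.log 2 * (1/(n:ℝ)))
  · have h0 : Tendsto (fun _ : ℕ => Real.log 2/((d:ℝ)+1)) atTop (nhds (Real.log 2/((d:ℝ)+1))) :=
      tendsto_const_nhds
    have := h0.sub (tendsto_one_div_atTop_nhds_zero_nat.const_mul (Real.log 2))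
    simpa using this
  · have h0 : Tendsto (fun _ : ℕ => Real.log 2/((d:ℝ)+1)) atTop (nhds (Real.log 2/((d:ℝ)+1))) :=
      tendsto_const_nhds
    have := h0.add (tendsto_one_div_atTop_nhds_zero_nat.const_mul (Real.log 2))
    simpa using this
  · filter_upwards [eventually_ge_atTop 1] with n hn
    have hn0 : (0:ℝ) < (n:ℝ) := by exact_mod_cast hn
    have key : (n:ℕ) < (d+1) * (n/(d+1)) + (d+1) := by
      have e := Nat.div_add_mod n (d+1)
      have m := Nat.mod_lt n (show 0 < d+1 from Nat.succ_pos d)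
      omega
    have key' : (n:ℝ) < ((d:ℝ)+1) * (((n/(d+1) : ℕ) : ℝ) + 1) := by
      have : ((n:ℕ):ℝ) < (((d+1) * (n/(d+1)) + (d+1) : ℕ) : ℝ) := by exact_mod_cast key
      push_cast at this
      linarith
    have hfloor : (n:ℝ)/((d:ℝ)+1) - 1 ≤ ((n/(d+1) : ℕ) : ℝ) := by
      rw [sub_le_iff_le_add, div_le_iff₀ hd1]
      nlinarith [key']
    have h1 : ((n:ℝ)/((d:ℝ)+1) - 1) * Real.log 2 ≤ rllInfMaxScore d n :=
      le_trans (mul_le_mul_of_nonneg_right hfloor hlog) (le_maxScore d n)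
    have h2 : ((n:ℝ)/((d:ℝ)+1) - 1) * Real.log 2 / (n:ℝ) ≤ rllInfMaxScore d n / (n:ℝ) := by
      gcongr
    calc Real.log 2/((d:ℝ)+1) - Real.log 2 * (1/(n:ℝ))
        = ((n:ℝ)/((d:ℝ)+1) - 1) * Real.log 2 / (n:ℝ) := by
          field_simp
      _ ≤ rllInfMaxScore d n / (n:ℝ) := h2
  · filter_upwards [eventually_ge_atTop 1] with n hn
    have hn0 : (0:ℝ) < (n:ℝ) := by exact_mod_cast hn
    have hcastdiv : (((n + d)/(d+1) : ℕ) : ℝ) ≤ ((n:ℝ) + (d:ℝ))/((d:ℝ)+1) := by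
      have := Nat.cast_div_le (α := ℝ) (m := n + d) (n := d+1)
      push_cast at this
      convert this using 2
    have hceil : (((n + d)/(d+1) : ℕ) : ℝ) ≤ (n:ℝ)/((d:ℝ)+1) + 1 := by
      apply le_trans hcastdiv
      rw [div_add' _ _ _ (ne_of_gt hd1), div_le_div_iff₀ hd1 hd1]
      nlinarith
    have h1 : rllInfMaxScore d n ≤ ((n:ℝ)/((d:ℝ)+1) + 1) * Real.log 2 :=
      le_trans (maxScore_le d n) (mul_le_mul_of_nonneg_right hceil hlog)
    have h2 : rllInfMaxScore d n / (n:ℝ) ≤ ((n:ℝ)/((d:ℝ)+1) + 1) * Real.log 2 / (n:ℝ) := by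
      gcongr
    calc rllInfMaxScore d n / (n:ℝ) ≤ ((n:ℝ)/((d:ℝ)+1) + 1) * Real.log 2 / (n:ℝ) := h2
      _ = Real.log 2/((d:ℝ)+1) + Real.log 2 * (1/(n:ℝ)) := by
          field_simp
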